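/- Let Y be a finite vertex-transitive graph on r vertices which is a core, and let Γ = n·Y be the disjoint union of n ≥ 2 copies of Y. Then Hull(Γ) = n·K_r: two distinct vertices of Γ are collapsed by some endomorphism of Γ iff they lie in different copies of Y. -/

import Mathlib

def isEnd {V : Type*} (X : SimpleGraph V) (f : V → V) : Prop :=
  ∀ v w, X.Adj v w → X.Adj (f v) (f w)

/-- The disjoint union of n copies of the graph Y. -/
def nCopies {V : Type*} (n : ℕ) (Y : SimpleGraph V) : SimpleGraph (Fin n × V) where
  Adj v w := v.1 = w.1 ∧ Y.Adj v.2 w.2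
  symm := ⟨fun v w h => ⟨h.1.symm, Y.symm.symm _ _ h.2⟩⟩
  loopless := ⟨fun v h => Y.loopless.irrefl _ h.2⟩

/-- if Y is a vertex-transitive core, then the hull of n.Y (n ≥ 2)
is n.K_r: two distinct vertices are collapsed by some endomorphism of n.Y iff
they lie in different copies of Y. -/
theorem stmt19 {V : Type*} [Fintype V] (Y : SimpleGraph V)
    (hcore : ∀ f, isEnd Y f → Function.Bijective f)
    (htrans : ∀ a b : V, ∃ e : Y ≃g Y, e a = b)
    (n : ℕ) (hn : 2 ≤ n) :
    ∀ v w : Fin n × V, v ≠ w →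
      ((∃ f, isEnd (nCopies n Y) f ∧ f v = f w) ↔ v.1 ≠ w.1) := by
  intro v w hvw
  constructor
  · rintro ⟨f, hf, hfvw⟩ h1
    apply hvw
    have hgend : isEnd Y (fun a => (f (v.1, a)).2) := fun a b hab =>
      (hf (v.1, a) (v.1, b) ⟨rfl, hab⟩).2
    have hbij := hcore _ hgend
    have h2 : (f (v.1, v.2)).2 = (f (v.1, w.2)).2 := by
      rw [show (v.1, v.2) = v from rfl, h1, show (w.1, w.2) = w from rfl, hfvw]
    have := hbij.1 h2
    exact Prod.ext h1 this
  · intro h1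
    obtain ⟨e, he⟩ := htrans v.2 w.2
    refine ⟨fun p => if p.1 = v.1 then (w.1, e p.2) else p, ?_, ?_⟩
    · rintro ⟨i, a⟩ ⟨j, b⟩ ⟨hij, hab⟩
      dsimp only at hij ⊢
      subst hij
      by_cases h : i = v.1
      · rw [if_pos h, if_pos h]
        exact ⟨rfl, e.map_adj_iff.mpr hab⟩
      · rw [if_neg h, if_neg h]
        exact ⟨rfl, hab⟩
    · have hw : w.1 ≠ v.1 := fun h => h1 h.symm
      simp [hw, he]
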